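/- In the completed enveloping algebra of $\widehat{\mathfrak{gl}}(m|n)$, for $i \ne 0$ and integer $a > 0$, the commutator $[\hbar(-1)^{p(i)}\sum_{s\ge 0}\sum_{k=1}^{i}(-1)^{p(k)}E_{i,k}(-s)E_{k,i}(s),\ ((-1)^{p(i)}E_{i,i}-(-1)^{p(i+1)}E_{i+1,i+1})\otimes t^a]$ equals $\hbar\sum_{s\ge0}\sum_{k=1}^{i-1}(-1)^{p(k)}E_{i,k}(-s)E_{k,i}(s+a) - \hbar\sum_{s\ge0}\sum_{k=1}^{i-1}(-1)^{p(k)}E_{i,k}(-s+a)E_{k,i}(s) - \hbar a c E_{i,i}(a)$, where $c$ is the central charge (the term $\hbar\sum_{s\ge0}\delta_{s+a,0}scE_{i,i}(-s)$ vanishes for $a>0$). -/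

import Mathlib

/-- in the completed enveloping algebra of affine gl(m|n)
(modelled by a topological algebra `A` with elements `EE i j r` representing
`E_{i,j} ⊗ t^r`, central charge `cc` and `z = 1`), for `i ≠ 0` and `a > 0`,
`[ℏ(-1)^{p(i)} Σ_{s≥0} Σ_{k=1}^{i} (-1)^{p(k)} E_{i,k}(-s)E_{k,i}(s),
  ((-1)^{p(i)}E_{i,i} - (-1)^{p(i+1)}E_{i+1,i+1}) t^a]
 = ℏ Σ_{s≥0} Σ_{k=1}^{i-1} (-1)^{p(k)} E_{i,k}(-s)E_{k,i}(s+a)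
   - ℏ Σ_{s≥0} Σ_{k=1}^{i-1} (-1)^{p(k)} E_{i,k}(-s+a)E_{k,i}(s)
   - ℏ a cc E_{i,i}(a)`. -/
theorem stmt15 (m n : ℕ) (hm : 2 ≤ m) (hn : 2 ≤ n) (hmn : m ≠ n)
    (A : Type*) [Ring A] [Algebra ℂ A] [TopologicalSpace A] [IsTopologicalRing A]
    [T2Space A]
    (p : ℕ → ℕ) (hp : ∀ j, p j = if j ≤ m then 0 else 1)
    (sg : ℕ → ℂ) (hsg : ∀ j, sg j = (-1 : ℂ) ^ (p j))
    (EE : ℕ → ℕ → ℤ → A) (cc ℏ : ℂ)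
    -- the commutation relations of affine gl(m|n) with c = cc·1 and z = 1:
    (hrel : ∀ i j k l : ℕ, ∀ r s : ℤ,
      EE i j r * EE k l s
        - ((-1 : ℂ) ^ ((p i + p j) * (p k + p l))) • (EE k l s * EE i j r)
      = (if j = k then EE i l (r + s) else 0)
        - ((-1 : ℂ) ^ ((p i + p j) * (p k + p l))) •
            (if l = i then EE k j (r + s) else 0)
        + (if r + s = 0 then
            (r : ℂ) * ((if j = k ∧ l = i then sg i * cc else 0)
              + (if i = j ∧ k = l then sg i * sg k else 0))
          else 0) • (1 : A))
    (i : ℕ) (hi : 1 ≤ i) (hi' : i ≤ m + n - 1) (a : ℤ) (ha : 0 < a)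
    (hsum1 : Summable fun s : ℕ =>
      ∑ k ∈ Finset.Icc 1 i, sg k • (EE i k (-(s : ℤ)) * EE k i (s : ℤ)))
    (hsum2 : Summable fun s : ℕ =>
      ∑ k ∈ Finset.Icc 1 (i - 1), sg k • (EE i k (-(s : ℤ)) * EE k i ((s : ℤ) + a)))
    (hsum3 : Summable fun s : ℕ =>
      ∑ k ∈ Finset.Icc 1 (i - 1), sg k • (EE i k (-(s : ℤ) + a) * EE k i (s : ℤ))) :
    ((ℏ * sg i) • ∑' s : ℕ,
        ∑ k ∈ Finset.Icc 1 i, sg k • (EE i k (-(s : ℤ)) * EE k i (s : ℤ)))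
        * (sg i • EE i i a - sg (i + 1) • EE (i + 1) (i + 1) a)
      - (sg i • EE i i a - sg (i + 1) • EE (i + 1) (i + 1) a)
        * ((ℏ * sg i) • ∑' s : ℕ,
            ∑ k ∈ Finset.Icc 1 i, sg k • (EE i k (-(s : ℤ)) * EE k i (s : ℤ)))
    = ℏ • (∑' s : ℕ, ∑ k ∈ Finset.Icc 1 (i - 1),
          sg k • (EE i k (-(s : ℤ)) * EE k i ((s : ℤ) + a)))
      - ℏ • (∑' s : ℕ, ∑ k ∈ Finset.Icc 1 (i - 1),
          sg k • (EE i k (-(s : ℤ) + a) * EE k i (s : ℤ)))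
      - (ℏ * (a : ℂ) * cc) • EE i i a := by
  -- abbreviations
  set T : A := sg i • EE i i a - sg (i + 1) • EE (i + 1) (i + 1) a with hT
  set f : ℕ → A := fun s => ∑ k ∈ Finset.Icc 1 i,
      sg k • (EE i k (-(s : ℤ)) * EE k i (s : ℤ)) with hf
  set g2 : ℕ → A := fun s => ∑ k ∈ Finset.Icc 1 (i - 1),
      sg k • (EE i k (-(s : ℤ)) * EE k i ((s : ℤ) + a)) with hg2
  set g3 : ℕ → A := fun s => ∑ k ∈ Finset.Icc 1 (i - 1),
      sg k • (EE i k (-(s : ℤ) + a) * EE k i (s : ℤ)) with hg3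
  -- sign squares
  have hsgsq : ∀ j, sg j * sg j = 1 := by
    intro j
    rw [hsg, ← pow_add]
    exact Even.neg_one_pow ⟨p j, rfl⟩
  -- plain commutator (the sign is +1 since j j has even parity)
  have hcom : ∀ x y j : ℕ, ∀ r s : ℤ,
      EE x y r * EE j j s - EE j j s * EE x y r
        = (if y = j then EE x j (r + s) else 0)
          - (if j = x then EE j y (r + s) else 0)
          + (if r + s = 0 then
              (r : ℂ) * ((if y = j ∧ j = x then sg x * cc else 0)
                + (if x = y then sg x * sg j else 0)) else 0) • (1 : A) := by
    intro x y j r s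
    have h := hrel x y j j r s
    have hsign : ((-1 : ℂ) ^ ((p x + p y) * (p j + p j))) = 1 :=
      Even.neg_one_pow ⟨(p x + p y) * p j, by ring⟩
    rw [hsign, one_smul, one_smul] at h
    simpa using h
  -- Leibniz identity for commutators
  have hleib : ∀ X Y Z : A, X * Y * Z - Z * (X * Y)
      = X * (Y * Z - Z * Y) + (X * Z - Z * X) * Y := by
    intro X Y Z; noncomm_ring
  -- expand commutator with T
  have hexp : ∀ B : A, B * T - T * B
      = sg i • (B * EE i i a - EE i i a * B)
        - sg (i + 1) • (B * EE (i + 1) (i + 1) a - EE (i + 1) (i + 1) a * B) := by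
    intro B
    rw [hT]
    rw [mul_sub, sub_mul, mul_smul_comm, mul_smul_comm, smul_mul_assoc,
      smul_mul_assoc, smul_sub, smul_sub]
    abel
  -- commutator of B_k with T, for k < i
  have hBk : ∀ r : ℤ, 0 ≤ r → ∀ k : ℕ, k < i →
      (EE i k (-r) * EE k i r) * T - T * (EE i k (-r) * EE k i r)
        = sg i • (EE i k (-r) * EE k i (r + a) - EE i k (-r + a) * EE k i r) := by
    intro r hr k hk
    have hik : ¬ i = k := by omega
    have hki : ¬ k = i := by omega
    have hki1 : ¬ k = i + 1 := by omega
    have hi1k : ¬ i + 1 = k := by omega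
    have hi1i : ¬ i + 1 = i := by omega
    have hii1 : ¬ i = i + 1 := by omega
    have hra : ¬ r + a = 0 := by omega
    have h1 : EE k i r * EE i i a - EE i i a * EE k i r = EE k i (r + a) := by
      have h := hcom k i i r a
      simp [hik, hra] at h
      exact h
    have h2 : EE i k (-r) * EE i i a - EE i i a * EE i k (-r) = - EE i k (-r + a) := by
      have h := hcom i k i (-r) a
      simp [hki, hik] at h
      first
      | exact h
      | (rw [h]; abel)
    have h3 : EE k i r * EE (i+1) (i+1) a - EE (i+1) (i+1) a * EE k i r = 0 := by
      have h := hcom k i (i+1) r a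
      simp [hii1, hi1k, hra, hki] at h
      exact h
    have h4 : EE i k (-r) * EE (i+1) (i+1) a - EE (i+1) (i+1) a * EE i k (-r) = 0 := by
      have h := hcom i k (i+1) (-r) a
      simp [hki1, hi1i, hik] at h
      exact h
    have hZ1 : (EE i k (-r) * EE k i r) * EE i i a - EE i i a * (EE i k (-r) * EE k i r)
        = EE i k (-r) * EE k i (r + a) - EE i k (-r + a) * EE k i r := by
      rw [hleib, h1, h2]; noncomm_ring
    have hZ2 : (EE i k (-r) * EE k i r) * EE (i+1) (i+1) a
        - EE (i+1) (i+1) a * (EE i k (-r) * EE k i r) = 0 := by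
      rw [hleib, h3, h4]; noncomm_ring
    rw [hexp, hZ1, hZ2, smul_zero, sub_zero]
  -- commutator of B_i with T
  have hBi : ∀ r : ℤ, 0 ≤ r →
      (EE i i (-r) * EE i i r) * T - T * (EE i i (-r) * EE i i r)
        = (if r = a then -((a : ℂ) * cc) else 0) • EE i i a := by
    intro r hr
    have hra : ¬ r + a = 0 := by omega
    have hi1i : ¬ i + 1 = i := by omega
    have hii1 : ¬ i = i + 1 := by omega
    have h1 : EE i i r * EE i i a - EE i i a * EE i i r = 0 := by
      have h := hcom i i i r a
      simpa [hra] using h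
    have h2 : EE i i (-r) * EE i i a - EE i i a * EE i i (-r)
        = (if -r + a = 0 then (-r : ℂ) * (sg i * cc + sg i * sg i) else 0) • (1 : A) := by
      have h := hcom i i i (-r) a
      simpa using h
    have h3 : EE i i r * EE (i+1) (i+1) a - EE (i+1) (i+1) a * EE i i r = 0 := by
      have h := hcom i i (i+1) r a
      simpa [hii1, hi1i, hra] using h
    have h4 : EE i i (-r) * EE (i+1) (i+1) a - EE (i+1) (i+1) a * EE i i (-r)
        = (if -r + a = 0 then (-r : ℂ) * (sg i * sg (i+1)) else 0) • (1 : A) := by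
      have h := hcom i i (i+1) (-r) a
      simpa [hii1, hi1i] using h
    have hZ1 : (EE i i (-r) * EE i i r) * EE i i a - EE i i a * (EE i i (-r) * EE i i r)
        = (if -r + a = 0 then (-r : ℂ) * (sg i * cc + sg i * sg i) else 0) • EE i i r := by
      rw [hleib, h1, h2, mul_zero, zero_add, smul_mul_assoc, one_mul]
    have hZ2 : (EE i i (-r) * EE i i r) * EE (i+1) (i+1) a
        - EE (i+1) (i+1) a * (EE i i (-r) * EE i i r)
        = (if -r + a = 0 then (-r : ℂ) * (sg i * sg (i+1)) else 0) • EE i i r := by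
      rw [hleib, h3, h4, mul_zero, zero_add, smul_mul_assoc, one_mul]
    rw [hexp, hZ1, hZ2, smul_smul, smul_smul]
    by_cases hcase : r = a
    · have hc0 : -r + a = 0 := by omega
      rw [if_pos hc0, if_pos hc0, if_pos hcase, ← sub_smul]
      subst hcase
      congr 1
      linear_combination (-(r : ℂ) * cc - r * sg i) * hsgsq i + ((r : ℂ) * sg i) * hsgsq (i+1)
    · have hc0 : ¬ (-r + a = 0) := by omega
      rw [if_neg hc0, if_neg hc0, if_neg hcase]
      simp
  -- pointwise identity
  have hpoint : ∀ s : ℕ, (ℏ * sg i) • (f s * T - T * f s)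
      = ℏ • g2 s - ℏ • g3 s
        - (if s = a.toNat then (ℏ * (a : ℂ) * cc) • EE i i a else 0) := by
    intro s
    have hr : (0 : ℤ) ≤ (s : ℤ) := Int.natCast_nonneg s
    have hsplit : Finset.Icc 1 i = insert i (Finset.Icc 1 (i - 1)) := by
      ext x
      simp only [Finset.mem_Icc, Finset.mem_insert]
      omega
    have hnotmem : i ∉ Finset.Icc 1 (i - 1) := by
      simp only [Finset.mem_Icc]; omega
    have hfsum : f s * T - T * f s
        = ∑ k ∈ Finset.Icc 1 i,
            sg k • ((EE i k (-(s:ℤ)) * EE k i (s:ℤ)) * T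
              - T * (EE i k (-(s:ℤ)) * EE k i (s:ℤ))) := by
      rw [hf]
      rw [Finset.sum_mul, Finset.mul_sum, ← Finset.sum_sub_distrib]
      refine Finset.sum_congr rfl fun k _ => ?_
      rw [smul_mul_assoc, mul_smul_comm, smul_sub]
    rw [hfsum, hsplit, Finset.sum_insert hnotmem, hBi (s:ℤ) hr]
    have hsum_eq : ∑ k ∈ Finset.Icc 1 (i - 1),
        sg k • ((EE i k (-(s:ℤ)) * EE k i (s:ℤ)) * T
          - T * (EE i k (-(s:ℤ)) * EE k i (s:ℤ)))
        = sg i • (g2 s - g3 s) := by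
      rw [hg2, hg3, ← Finset.sum_sub_distrib, Finset.smul_sum]
      refine Finset.sum_congr rfl fun k hk => ?_
      have hklt : k < i := by
        simp only [Finset.mem_Icc] at hk; omega
      rw [hBk (s:ℤ) hr k hklt, smul_comm, smul_sub]
    rw [hsum_eq]
    have hcoeff : (ℏ * sg i) • (sg i • (g2 s - g3 s)) = ℏ • g2 s - ℏ • g3 s := by
      rw [smul_smul, mul_assoc, hsgsq i, mul_one, smul_sub]
    have hcoeff2 : (ℏ * sg i) • (sg i • ((if (s:ℤ) = a then -((a : ℂ) * cc) else 0) • EE i i a))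
        = -(if s = a.toNat then (ℏ * (a : ℂ) * cc) • EE i i a else 0) := by
      have hiff : (s:ℤ) = a ↔ s = a.toNat := by omega
      by_cases hcase : s = a.toNat
      · rw [if_pos (hiff.mpr hcase), if_pos hcase, smul_smul, smul_smul, ← neg_smul]
        congr 1
        have := hsgsq i
        ring_nf
        linear_combination (-(ℏ : ℂ) * a * cc) * hsgsq i
      · rw [if_neg (fun h => hcase (hiff.mp h)), if_neg hcase]
        simp
    rw [smul_add, hcoeff, hcoeff2]
    abel
  -- scalar smul moves through tsum
  have hsmul_tsum : ∀ (c : ℂ) (F : ℕ → A), Summable F →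
      c • ∑' s, F s = ∑' s, c • F s := by
    intro c F hF
    simp_rw [Algebra.smul_def]
    exact (hF.tsum_mul_left _).symm
  have hsummul : ∀ (c : ℂ) (F : ℕ → A), Summable F → Summable (fun s => c • F s) := by
    intro c F hF
    simpa [Algebra.smul_def] using hF.mul_left (algebraMap ℂ A c)
  -- assemble LHS
  have hLHS : ((ℏ * sg i) • ∑' s : ℕ, f s) * T - T * ((ℏ * sg i) • ∑' s : ℕ, f s)
      = ∑' s : ℕ, (ℏ * sg i) • (f s * T - T * f s) := by
    rw [smul_mul_assoc, mul_smul_comm, ← smul_sub,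
      ← hsum1.tsum_mul_right T, ← hsum1.tsum_mul_left T,
      ← Summable.tsum_sub (hsum1.mul_right T) (hsum1.mul_left T),
      hsmul_tsum _ _ ((hsum1.mul_right T).sub (hsum1.mul_left T))]
  -- assemble RHS
  have hind : Summable (fun s : ℕ =>
      if s = a.toNat then (ℏ * (a : ℂ) * cc) • EE i i a else 0) :=
    summable_of_ne_finset_zero (s := {a.toNat}) (by
      intro b hb
      simp only [Finset.mem_singleton] at hb
      rw [if_neg hb])
  have hRHS : ℏ • (∑' s : ℕ, g2 s) - ℏ • (∑' s : ℕ, g3 s) - (ℏ * (a : ℂ) * cc) • EE i i a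
      = ∑' s : ℕ, (ℏ • g2 s - ℏ • g3 s
          - (if s = a.toNat then (ℏ * (a : ℂ) * cc) • EE i i a else 0)) := by
    rw [hsmul_tsum _ _ hsum2, hsmul_tsum _ _ hsum3,
      ← tsum_ite_eq (a.toNat) (fun _ => (ℏ * (a : ℂ) * cc) • EE i i a),
      ← Summable.tsum_sub (hsummul ℏ _ hsum2) (hsummul ℏ _ hsum3),
      ← Summable.tsum_sub (((hsummul ℏ _ hsum2)).sub (hsummul ℏ _ hsum3)) hind]
    exact tsum_congr fun b => by rw [tsum_ite_eq]
  rw [hLHS, hRHS]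
  exact tsum_congr hpoint
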